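/- Let G be a group acting on a set S, generated by a subset R ⊆ G. Assume each r ∈ R has an associated subset S_r ⊆ S such that: (1) if a, b ∈ R commute, then a^k · S_b ⊆ S_b for every nonzero integer k; (2) if a, b ∈ R do not commute, then a^k · S_b ⊆ S_a for every nonzero integer k; (3) there exists a point s₀ ∈ S not belonging to any S_r such that a^k · s₀ ∈ S_a for every a ∈ R and every nonzero integer k. Then the identity map R → R extends to a group isomorphism A(C_R) → G, where C_R is the commutation graph of R. -/

import Mathlib

universe u

/-- The defining relators of the right-angled Artin group of a simple graph. -/
def raagRels {V : Type u} (Γ : SimpleGraph V) : Set (FreeGroup V) :=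
  {r | ∃ u v : V, Γ.Adj u v ∧
    r = FreeGroup.of u * FreeGroup.of v * (FreeGroup.of u)⁻¹ * (FreeGroup.of v)⁻¹}

/-- The right-angled Artin group of a simple graph. -/
abbrev RAAG {V : Type u} (Γ : SimpleGraph V) : Type u := PresentedGroup (raagRels Γ)

/-- The generator of `RAAG Γ` corresponding to a vertex. -/
def raagGen {V : Type u} (Γ : SimpleGraph V) (u : V) : RAAG Γ :=
  PresentedGroup.of (rels := raagRels Γ) u

/-- The commutation graph of a subset `R` of a group: vertices are the elements of
`R`, two distinct elements being adjacent iff they commute. -/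
def commGraph (G : Type*) [Group G] (R : Set G) : SimpleGraph R where
  Adj a b := a ≠ b ∧ Commute (a : G) (b : G)
  symm := ⟨fun _ _ ⟨h1, h2⟩ => ⟨h1.symm, h2.symm⟩⟩
  loopless := ⟨fun _ ⟨h1, _⟩ => h1 rfl⟩

namespace RaagPP

variable {G : Type*} [Group G] {R : Set G}

/-- The product in `RAAG (commGraph G R)` of a list of syllables. -/
def prodA (R : Set G) (L : List (R × ℤ)) : RAAG (commGraph G R) :=
  (L.map fun p => (raagGen (commGraph G R) p.1) ^ p.2).prod

/-- The product in `G` of a list of syllables. -/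
def prodG (R : Set G) (L : List (R × ℤ)) : G :=
  (L.map fun p => (p.1 : G) ^ p.2).prod

@[simp] lemma prodA_nil : prodA R [] = 1 := rfl

@[simp] lemma prodA_cons (a : R) (e : ℤ) (L : List (R × ℤ)) :
    prodA R ((a, e) :: L) = (raagGen (commGraph G R) a) ^ e * prodA R L := by
  simp [prodA]

@[simp] lemma prodA_append (L M : List (R × ℤ)) :
    prodA R (L ++ M) = prodA R L * prodA R M := by
  simp [prodA]

@[simp] lemma prodG_nil : prodG R [] = 1 := rfl

@[simp] lemma prodG_cons (a : R) (e : ℤ) (L : List (R × ℤ)) :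
    prodG R ((a, e) :: L) = (a : G) ^ e * prodG R L := by
  simp [prodG]

lemma gen_commute {a b : R} (h : Commute (a : G) (b : G)) :
    Commute (raagGen (commGraph G R) a) (raagGen (commGraph G R) b) := by
  rcases eq_or_ne a b with rfl | hne
  · exact Commute.refl _
  · have hrel : (FreeGroup.of a * FreeGroup.of b * (FreeGroup.of a)⁻¹ * (FreeGroup.of b)⁻¹)
        ∈ raagRels (commGraph G R) := ⟨a, b, ⟨hne, h⟩, rfl⟩
    have h1 : (QuotientGroup.mk (FreeGroup.of a * FreeGroup.of b * (FreeGroup.of a)⁻¹ *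
        (FreeGroup.of b)⁻¹) : RAAG (commGraph G R)) = 1 :=
      (QuotientGroup.eq_one_iff _).mpr (Subgroup.subset_normalClosure hrel)
    rw [← commutatorElement_eq_one_iff_commute]
    exact h1

/-- A syllable list is reduced: all exponents nonzero, and between any two syllables
with the same generator there is a syllable not commuting with it. -/
def Red (R : Set G) (L : List (R × ℤ)) : Prop :=
  (∀ p ∈ L, p.2 ≠ 0) ∧
  ∀ (L₁ : List (R × ℤ)) (a : R) (e : ℤ) (L₂ : List (R × ℤ)) (f : ℤ) (L₃ : List (R × ℤ)),
    L = L₁ ++ (a, e) :: L₂ ++ (a, f) :: L₃ → ∃ p ∈ L₂, ¬ Commute (a : G) (p.1 : G)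

lemma red_nil : Red R ([] : List (R × ℤ)) := by
  refine ⟨by simp, ?_⟩
  intro L₁ a e L₂ f L₃ h
  exact absurd h.symm (by simp)

lemma Red.tail {a : R} {e : ℤ} {L : List (R × ℤ)} (h : Red R ((a, e) :: L)) : Red R L := by
  refine ⟨fun p hp => h.1 p (List.mem_cons_of_mem _ hp), ?_⟩
  intro L₁ c e' L₂ f' L₃ hdec
  exact h.2 ((a, e) :: L₁) c e' L₂ f' L₃ (by simp [hdec])

lemma Red.drop_snd {a b : R} {e f : ℤ} {L : List (R × ℤ)}
    (h : Red R ((a, e) :: (b, f) :: L)) (hc : Commute (a : G) (b : G)) :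
    Red R ((a, e) :: L) := by
  constructor
  · intro p hp
    rcases List.mem_cons.mp hp with rfl | hp
    · exact h.1 _ List.mem_cons_self
    · exact h.1 p (by simp [hp])
  · intro L₁ c e' L₂ f' L₃ hdec
    cases L₁ with
    | nil =>
      simp only [List.nil_append, List.cons_append, List.cons.injEq, Prod.mk.injEq] at hdec
      obtain ⟨⟨h1', h2'⟩, hL⟩ := hdec
      subst h1'
      subst h2'
      obtain ⟨p, hp, hpc⟩ := h.2 [] a e ((b, f) :: L₂) f' L₃ (by simp [hL])
      rcases List.mem_cons.mp hp with rfl | hp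
      · exact absurd hc hpc
      · exact ⟨p, hp, hpc⟩
    | cons q L₁' =>
      simp only [List.cons_append, List.cons.injEq] at hdec
      obtain ⟨rfl, hL⟩ := hdec
      exact h.2 ((a, e) :: (b, f) :: L₁') c e' L₂ f' L₃ (by simp [hL])

lemma prodA_merge (L₁ L₂ L₃ : List (R × ℤ)) (a : R) (e f : ℤ)
    (hc : ∀ p ∈ L₂, Commute (a : G) (p.1 : G)) :
    prodA R (L₁ ++ L₂ ++ (a, e + f) :: L₃) = prodA R (L₁ ++ ((a, e) :: L₂ ++ (a, f) :: L₃)) := by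
  have key : Commute ((raagGen (commGraph G R) a) ^ e) (prodA R L₂) := by
    refine Commute.list_prod_right _ _ ?_
    intro x hx
    obtain ⟨p, hp, rfl⟩ := List.mem_map.mp hx
    exact ((gen_commute (hc p hp)).zpow_zpow e p.2)
  simp only [prodA_append, prodA_cons, List.cons_append, zpow_add, mul_assoc]
  congr 1
  exact key.symm.left_comm _

lemma exists_red : ∀ (n : ℕ) (L : List (R × ℤ)), L.length ≤ n →
    ∃ L', Red R L' ∧ prodA R L' = prodA R L := by
  intro n
  induction n with
  | zero =>
    intro L hL
    rw [List.length_eq_zero_iff.mp (Nat.le_zero.mp hL)]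
    exact ⟨[], red_nil, rfl⟩
  | succ n ih =>
    intro L hL
    by_cases hred : Red R L
    · exact ⟨L, hred, rfl⟩
    · rcases not_and_or.mp hred with hz | hm
      · push_neg at hz
        obtain ⟨p, hp, hp0⟩ := hz
        obtain ⟨s, t, rfl⟩ := List.append_of_mem hp
        obtain ⟨L', hL', hprod⟩ := ih (s ++ t) (by simp only [List.length_append, List.length_cons] at hL ⊢; omega)
        refine ⟨L', hL', ?_⟩
        rw [hprod]
        obtain ⟨c, e⟩ := p
        have he0 : e = 0 := hp0
        simp [he0]
      · push_neg at hm
        obtain ⟨L₁, a, e, L₂, f, L₃, hdec, hcomm⟩ := hm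
        obtain ⟨L', hL', hprod⟩ := ih (L₁ ++ L₂ ++ (a, e + f) :: L₃)
          (by subst hdec; simp only [List.length_append, List.length_cons] at hL ⊢; omega)
        refine ⟨L', hL', ?_⟩
        rw [hprod, hdec]
        rw [prodA_merge L₁ L₂ L₃ a e f hcomm]
        simp

lemma exists_list (x : RAAG (commGraph G R)) : ∃ L : List (R × ℤ), prodA R L = x := by
  obtain ⟨w, rfl⟩ := QuotientGroup.mk'_surjective (Subgroup.normalClosure
    (raagRels (commGraph G R))) x
  induction w using FreeGroup.induction_on with
  | C1 => exact ⟨[], rfl⟩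
  | of x =>
    refine ⟨[(x, 1)], ?_⟩
    simp only [prodA_cons, prodA_nil, mul_one, zpow_one]
    rfl
  | inv_of x _ =>
    refine ⟨[(x, -1)], ?_⟩
    have hx : raagGen (commGraph G R) x =
        (QuotientGroup.mk' (Subgroup.normalClosure (raagRels (commGraph G R)))) (pure x) := rfl
    simp only [prodA_cons, prodA_nil, mul_one]
    rw [zpow_neg_one]
    rfl
  | mul x y ihx ihy =>
    obtain ⟨Lx, hx⟩ := ihx
    obtain ⟨Ly, hy⟩ := ihy
    exact ⟨Lx ++ Ly, by rw [prodA_append, hx, hy, map_mul]; rfl⟩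

open Pointwise in
lemma pingpong {S : Type*} [MulAction G S] (Sr : R → Set S)
    (h1 : ∀ a b : R, Commute (a : G) (b : G) →
      ∀ k : ℤ, k ≠ 0 → ((a : G) ^ k) • Sr b ⊆ Sr b)
    (h2 : ∀ a b : R, ¬ Commute (a : G) (b : G) →
      ∀ k : ℤ, k ≠ 0 → ((a : G) ^ k) • Sr b ⊆ Sr a)
    (s₀ : S)
    (h3 : ∀ (a : R) (k : ℤ), k ≠ 0 → ((a : G) ^ k) • s₀ ∈ Sr a) :
    ∀ (L : List (R × ℤ)) (a : R) (e : ℤ), Red R ((a, e) :: L) →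
      prodG R ((a, e) :: L) • s₀ ∈ Sr a := by
  intro L
  induction L with
  | nil =>
    intro a e hred
    have he : e ≠ 0 := hred.1 (a, e) List.mem_cons_self
    simpa [mul_smul] using h3 a e he
  | cons q L ih =>
    obtain ⟨b, f⟩ := q
    intro a e hred
    have he : e ≠ 0 := hred.1 (a, e) List.mem_cons_self
    have hf : f ≠ 0 := hred.1 (b, f) (by simp)
    by_cases hc : Commute (a : G) (b : G)
    · have hred' : Red R ((a, e) :: L) := hred.drop_snd hc
      have hmem := ih a e hred'
      have hcz : Commute ((a : G) ^ e) ((b : G) ^ f) := hc.zpow_zpow e f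
      have heq : prodG R ((a, e) :: (b, f) :: L) =
          (b : G) ^ f * prodG R ((a, e) :: L) := by
        simp only [prodG_cons, ← mul_assoc, hcz.eq]
      rw [heq, mul_smul]
      exact h1 b a hc.symm f hf (Set.smul_mem_smul_set hmem)
    · have hmem := ih b f hred.tail
      have heq : prodG R ((a, e) :: (b, f) :: L) =
          (a : G) ^ e * prodG R ((b, f) :: L) := by
        simp only [prodG_cons, mul_assoc]
      rw [heq, mul_smul]
      exact h2 a b hc e he (Set.smul_mem_smul_set hmem)

end RaagPP

open Pointwise in
/-- The ping-pong lemma for right-angled Artin groups. -/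
theorem raag_ping_pong {G S : Type*} [Group G] [MulAction G S] (R : Set G)
    (hgen : Subgroup.closure R = ⊤) (Sr : R → Set S)
    (h1 : ∀ a b : R, Commute (a : G) (b : G) →
      ∀ k : ℤ, k ≠ 0 → ((a : G) ^ k) • Sr b ⊆ Sr b)
    (h2 : ∀ a b : R, ¬ Commute (a : G) (b : G) →
      ∀ k : ℤ, k ≠ 0 → ((a : G) ^ k) • Sr b ⊆ Sr a)
    (s₀ : S) (hs₀ : s₀ ∉ ⋃ r : R, Sr r)
    (h3 : ∀ (a : R) (k : ℤ), k ≠ 0 → ((a : G) ^ k) • s₀ ∈ Sr a) :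
    ∃ φ : RAAG (commGraph G R) ≃* G,
      ∀ r : R, φ (raagGen (commGraph G R) r) = (r : G) := by
  classical
  have hker : ∀ r ∈ raagRels (commGraph G R),
      FreeGroup.lift (fun r : R => (r : G)) r = 1 := by
    rintro r ⟨u, v, ⟨huv, hcomm⟩, rfl⟩
    simp only [map_mul, map_inv, FreeGroup.lift_apply_of]
    rw [← commutatorElement_def]
    exact commutatorElement_eq_one_iff_commute.mpr hcomm
  set φ : RAAG (commGraph G R) →* G := PresentedGroup.toGroup hker with hφ
  have hof : ∀ r : R, φ (raagGen (commGraph G R) r) = (r : G) := by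
    intro r
    exact PresentedGroup.toGroup.of hker
  have hprod : ∀ L : List (R × ℤ), φ (RaagPP.prodA R L) = RaagPP.prodG R L := by
    intro L
    induction L with
    | nil => simp [RaagPP.prodA, RaagPP.prodG]
    | cons p L ih =>
      obtain ⟨a, e⟩ := p
      rw [RaagPP.prodA_cons, RaagPP.prodG_cons, map_mul, map_zpow, hof, ih]
  have hinj : Function.Injective φ := by
    rw [injective_iff_map_eq_one]
    intro x hx
    obtain ⟨L, rfl⟩ := RaagPP.exists_list x
    obtain ⟨L', hred, hL'⟩ := RaagPP.exists_red L.length L le_rfl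
    rw [← hL'] at hx ⊢
    match L', hred with
    | [], _ => rfl
    | (a, e) :: M, hred =>
      exfalso
      have := RaagPP.pingpong Sr h1 h2 s₀ h3 M a e hred
      rw [hprod] at hx
      rw [hx, one_smul] at this
      exact hs₀ (Set.mem_iUnion.mpr ⟨a, this⟩)
  have hsurj : Function.Surjective φ := by
    rw [← MonoidHom.range_eq_top]
    rw [← top_le_iff, ← hgen]
    rw [Subgroup.closure_le]
    intro g hg
    exact ⟨raagGen (commGraph G R) ⟨g, hg⟩, hof ⟨g, hg⟩⟩
  exact ⟨MulEquiv.ofBijective φ ⟨hinj, hsurj⟩, hof⟩
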